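/- With the relation extensions P₁, …, P_k pairwise disjoint, a tuple t ∈ D belongs to the repair core Core(D) if and only if t participates in no witness of Q, i.e., there is no f with W(f), f(j) ∈ P_j for all j, and f(i) = t for some i. -/

import Mathlib

open Classical

variable {α : Type*} [DecidableEq α] {k : ℕ}

/-- The database: the union of the relation extensions `P 1, …, P k`. -/
def DB (P : Fin k → Finset α) : Finset α :=
  Finset.univ.biUnion P

/-- A subset `D'` satisfies the query: there is a witness `f` with
`f i ∈ Pᵢ ∩ D'` for every atom `i`, jointly satisfying the join conditions `W`. -/
def Sat (P : Fin k → Finset α) (W : (Fin k → α) → Prop) (D' : Finset α) : Prop :=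
  ∃ f : Fin k → α, (∀ i, f i ∈ P i ∩ D') ∧ W f

/-- `D'` is an S-repair of the database w.r.t. the denial constraint `¬Q`:
a subset-maximal subset not satisfying the query. -/
def IsSRepair (P : Fin k → Finset α) (W : (Fin k → α) → Prop) (D' : Finset α) : Prop :=
  D' ⊆ DB P ∧ ¬ Sat P W D' ∧ ∀ D'', D'' ⊆ DB P → D' ⊂ D'' → Sat P W D''

/-- The repair core: the intersection of all S-repairs of the database. -/
noncomputable def Core (P : Fin k → Finset α) (W : (Fin k → α) → Prop) : Finset α :=
  (DB P).filter (fun t => ∀ D', IsSRepair P W D' → t ∈ D')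

/-- `Rᵢ`: the tuples of `Pᵢ` participating in some witness of the query. -/
noncomputable def Rset (P : Fin k → Finset α) (W : (Fin k → α) → Prop) (i : Fin k) :
    Finset α :=
  (P i).filter (fun t => ∃ f : Fin k → α, f i = t ∧ (∀ j, f j ∈ P j) ∧ W f)

/-- `S` is a sufficient-set: `S ⊆ D` and `sat(S)`. -/
def SuffSet (P : Fin k → Finset α) (W : (Fin k → α) → Prop) (S : Finset α) : Prop :=
  S ⊆ DB P ∧ Sat P W S

/-- Minimal sufficient-set (MSS). -/
def MSSuff (P : Fin k → Finset α) (W : (Fin k → α) → Prop) (S : Finset α) : Prop :=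
  SuffSet P W S ∧ ∀ S' ⊂ S, ¬ SuffSet P W S'

/-- `N` is a necessary-set: `N ⊆ D` and `¬ sat(D ∖ N)`. -/
def NecSet (P : Fin k → Finset α) (W : (Fin k → α) → Prop) (N : Finset α) : Prop :=
  N ⊆ DB P ∧ ¬ Sat P W (DB P \ N)

/-- Minimal necessary-set (MNS). -/
def MNS (P : Fin k → Finset α) (W : (Fin k → α) → Prop) (N : Finset α) : Prop :=
  NecSet P W N ∧ ∀ N' ⊂ N, ¬ NecSet P W N'

theorem stmt9 (hk : 1 ≤ k) (P : Fin k → Finset α)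
    (hdisj : ∀ i j : Fin k, i ≠ j → Disjoint (P i) (P j))
    (W : (Fin k → α) → Prop) (hD : Sat P W (DB P))
    (t : α) (ht : t ∈ DB P) :
    t ∈ Core P W ↔
      ¬ ∃ f : Fin k → α, W f ∧ (∀ j, f j ∈ P j) ∧ ∃ i, f i = t := by
  constructor
  · rintro hcore ⟨f, hW, hfP, i, hfi⟩
    -- build an S-repair not containing t
    set S : Finset α := (Finset.univ.erase i).image f with hS
    have htS : t ∉ S := by
      intro h
      obtain ⟨j, hj, hjf⟩ := Finset.mem_image.1 h
      have hji : j ≠ i := (Finset.mem_erase.1 hj).1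
      exact Finset.disjoint_left.1 (hdisj j i hji) (hjf ▸ hfP j) (by rw [← hfi] at hjf ⊢; exact hjf ▸ hfP i)
    have hSDB : S ⊆ DB P := by
      intro x hx
      obtain ⟨j, _, hjf⟩ := Finset.mem_image.1 hx
      exact Finset.mem_biUnion.2 ⟨j, Finset.mem_univ j, hjf ▸ hfP j⟩
    have hSnosat : ¬ Sat P W S := by
      rintro ⟨g, hg, _⟩
      have hgi := hg i
      rw [Finset.mem_inter] at hgi
      obtain ⟨j, hj, hjf⟩ := Finset.mem_image.1 hgi.2
      exact Finset.disjoint_left.1 (hdisj j i (Finset.mem_erase.1 hj).1)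
        (hjf ▸ hfP j) (hjf ▸ hgi.1)
    set F : Finset (Finset α) :=
      ((DB P).erase t).powerset.filter (fun A => S ⊆ A ∧ ¬ Sat P W A) with hF
    have hSF : S ∈ F := by
      refine Finset.mem_filter.2 ⟨Finset.mem_powerset.2 ?_, le_refl S, hSnosat⟩
      intro x hx
      exact Finset.mem_erase.2 ⟨fun h => htS (h ▸ hx), hSDB hx⟩
    obtain ⟨D', hD'F, hD'max⟩ := F.exists_maximal ⟨S, hSF⟩
    rw [hF, Finset.mem_filter, Finset.mem_powerset] at hD'F
    obtain ⟨hD'sub, hSD', hD'nosat⟩ := hD'F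
    have htD' : t ∉ D' := fun h => (Finset.mem_erase.1 (hD'sub h)).1 rfl
    have hrep : IsSRepair P W D' := by
      refine ⟨fun x hx => (Finset.mem_erase.1 (hD'sub hx)).2, hD'nosat, ?_⟩
      intro D'' hD''sub hlt
      by_cases htD'' : t ∈ D''
      · refine ⟨f, fun j => Finset.mem_inter.2 ⟨hfP j, ?_⟩, hW⟩
        by_cases hji : j = i
        · subst hji; rw [hfi]; exact htD''
        · exact hlt.1 (hSD' (Finset.mem_image.2 ⟨j, Finset.mem_erase.2 ⟨hji, Finset.mem_univ j⟩, rfl⟩))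
      · by_contra hnosat
        refine hlt.2 (hD'max (Finset.mem_filter.2 ⟨Finset.mem_powerset.2 ?_, hSD'.trans hlt.1, hnosat⟩) hlt.1)
        intro x hx
        exact Finset.mem_erase.2 ⟨fun h => htD'' (h ▸ hx), hD''sub hx⟩
    exact htD' ((Finset.mem_filter.1 hcore).2 D' hrep)
  · intro hno
    refine Finset.mem_filter.2 ⟨ht, fun D' hD' => ?_⟩
    by_contra htD'
    have hsub : insert t D' ⊆ DB P := Finset.insert_subset ht hD'.1
    have hlt : D' ⊂ insert t D' := Finset.ssubset_insert htD'
    obtain ⟨f, hf, hW⟩ := hD'.2.2 (insert t D') hsub hlt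
    have hfD' : ∀ j, f j ∈ P j ∩ D' := by
      intro j
      have hj := Finset.mem_inter.1 (hf j)
      rcases Finset.mem_insert.1 hj.2 with h | h
      · exact absurd ⟨f, hW, fun j' => (Finset.mem_inter.1 (hf j')).1, j, h⟩ hno
      · exact Finset.mem_inter.2 ⟨hj.1, h⟩
    exact hD'.2.1 ⟨f, hfD', hW⟩
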